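/- Consider any assignment scheme A ∈ ℝ^{n×m} with at most dn nonzero entries, and a fixed-coefficient decoding scheme w_j = ŵ_j·B_j with B_j i.i.d. Bernoulli(1−p), that is unbiased: E[Aw] = 𝟙. Then (1/n)·E[|Aw − 𝟙|₂²] ≥ p/(d(1−p)). -/

import Mathlib

open MeasureTheory ProbabilityTheory Finset Matrix

/-- For any assignment matrix `A` with at most `d n` nonzero entries and
any fixed-coefficient decoding `w_j = ŵ_j B_j` (with `B_j` i.i.d. Bernoulli(1-p)) that is
unbiased, `E[A w] = 𝟙`, we have `(1/n) E[|A w - 𝟙|₂²] ≥ p/(d(1 - p))`. -/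
theorem stmt13 {Ω : Type*} [MeasurableSpace Ω] (μ : Measure Ω) [IsProbabilityMeasure μ]
    (n m d : ℕ) (hn : 0 < n) (hd : 0 < d)
    (p : ℝ) (hp0 : 0 < p) (hp1 : p < 1)
    (A : Matrix (Fin n) (Fin m) ℝ)
    (hnnz : ((univ : Finset (Fin n × Fin m)).filter fun q => A q.1 q.2 ≠ 0).card ≤ d * n)
    (what : Fin m → ℝ)
    (B : Fin m → Ω → ℝ) (hBmeas : ∀ j, Measurable (B j))
    (hindep : iIndepFun B μ)
    (hB01 : ∀ j ω, B j ω = 0 ∨ B j ω = 1)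
    (hBp : ∀ j, μ (B j ⁻¹' {1}) = ENNReal.ofReal (1 - p))
    (α : Ω → Fin n → ℝ)
    (hα : ∀ ω, α ω = A.mulVec fun j => what j * B j ω)
    (hunbiased : ∀ i, ∫ ω, α ω i ∂μ = 1) :
    p / (d * (1 - p)) ≤ (1 / n : ℝ) * ∫ ω, ∑ i, (α ω i - 1) ^ 2 ∂μ := by
  have hq : (0:ℝ) < 1 - p := by linarith
  set c : Fin n → Fin m → ℝ := fun i j => A i j * what j with hcdef
  have hαi : ∀ ω i, α ω i = ∑ j, c i j * B j ω := by
    intro ω i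
    rw [hα]
    simp [Matrix.mulVec, dotProduct, hcdef, mul_assoc]
  -- B j as indicator
  have hSmeas : ∀ j, MeasurableSet (B j ⁻¹' {1}) :=
    fun j => hBmeas j (measurableSet_singleton 1)
  have hBind : ∀ j, B j = Set.indicator (B j ⁻¹' {1}) (fun _ => (1:ℝ)) := by
    intro j; funext ω
    rcases hB01 j ω with h | h
    · rw [h, Set.indicator_of_notMem]
      simp [Set.mem_preimage, h]
    · rw [h, Set.indicator_of_mem]
      simp [Set.mem_preimage, h]
  have hEB : ∀ j, ∫ ω, B j ω ∂μ = 1 - p := by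
    intro j
    have : ∫ ω, B j ω ∂μ = ∫ ω, Set.indicator (B j ⁻¹' {1}) (fun _ => (1:ℝ)) ω ∂μ := by
      rw [← hBind j]
    rw [this, integral_indicator_const (1 : ℝ) (hSmeas j), measureReal_def, hBp j,
      ENNReal.toReal_ofReal hq.le, smul_eq_mul, mul_one]
  have hBmem : ∀ j, MemLp (B j) 2 μ := by
    intro j
    refine memLp_of_bounded (a := 0) (b := 1) (Filter.Eventually.of_forall fun ω => ?_)
      (hBmeas j).aestronglyMeasurable 2
    rcases hB01 j ω with h | h <;> rw [h] <;> constructor <;> norm_num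
  have hVarB : ∀ j, variance (B j) μ = p * (1 - p) := by
    intro j
    rw [variance_eq_sub (hBmem j)]
    have h2 : ∫ ω, (B j ^ 2) ω ∂μ = 1 - p := by
      have : ∀ ω, (B j ^ 2) ω = B j ω := by
        intro ω; rcases hB01 j ω with h | h <;> simp [h]
      simp_rw [this]; exact hEB j
    rw [h2, hEB j]; ring
  -- per-row facts
  have hXmem : ∀ i j, MemLp (fun ω => c i j * B j ω) 2 μ :=
    fun i j => (hBmem j).const_mul _
  have hαmem : ∀ i, MemLp (fun ω => α ω i) 2 μ := by
    intro i
    have : (fun ω => α ω i) = ∑ j, (fun ω => c i j * B j ω) := by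
      funext ω; rw [hαi ω i]; simp
    rw [this]
    exact memLp_finset_sum' _ fun j _ => hXmem i j
  have hEα : ∀ i, ∫ ω, α ω i ∂μ = (∑ j, c i j) * (1 - p) := by
    intro i
    simp_rw [hαi]
    rw [integral_finset_sum _ fun j _ => ((hXmem i j).integrable one_le_two)]
    simp_rw [MeasureTheory.integral_const_mul, hEB, Finset.sum_mul]
  have hrow : ∀ i, (∑ j, c i j) * (1 - p) = 1 := by
    intro i; rw [← hEα i]; exact hunbiased i
  have hVarα : ∀ i, ∫ ω, (α ω i - 1) ^ 2 ∂μ = p * (1 - p) * ∑ j, (c i j) ^ 2 := by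
    intro i
    have hveq : variance (fun ω => α ω i) μ = p * (1 - p) * ∑ j, (c i j) ^ 2 := by
      have hs : (fun ω => α ω i) = ∑ j, (fun ω => c i j * B j ω) := by
        funext ω; rw [hαi ω i]; simp
      rw [hs, IndepFun.variance_sum (fun j _ => hXmem i j)
        (fun j _ k _ hjk => ((hindep.indepFun hjk).comp
          (measurable_const_mul (c i j)) (measurable_const_mul (c i k))))]
      have : ∀ j, variance (fun ω => c i j * B j ω) μ = (c i j) ^ 2 * (p * (1 - p)) := by
        intro j
        have : (fun ω => c i j * B j ω) = c i j • B j := rfl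
        rw [this, variance_smul, hVarB j]
      simp_rw [this]
      rw [← Finset.sum_mul]; ring
    have hv := variance_eq_integral (hαmem i).aemeasurable
    simp only [Pi.pow_apply, Pi.sub_apply] at hv
    rw [hunbiased i, hveq] at hv
    exact hv.symm
  -- total sum
  have hInt : ∀ i, Integrable (fun ω => (α ω i - 1) ^ 2) μ := by
    intro i
    have h2 : MemLp (fun ω => α ω i - 1) 2 μ := (hαmem i).sub (memLp_const 1)
    have := h2.integrable_sq
    simpa [pow_two] using this
  have hTot : ∫ ω, ∑ i, (α ω i - 1) ^ 2 ∂μ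
      = p * (1 - p) * ∑ i, ∑ j, (c i j) ^ 2 := by
    rw [integral_finset_sum _ fun i _ => hInt i]
    simp_rw [hVarα]
    rw [← Finset.mul_sum]
  -- Cauchy-Schwarz
  set T := (univ : Finset (Fin n × Fin m)).filter fun q => A q.1 q.2 ≠ 0 with hT
  have hsumc : ∑ q ∈ T, c q.1 q.2 = (n : ℝ) / (1 - p) := by
    have h1 : ∑ q ∈ T, c q.1 q.2 = ∑ q : Fin n × Fin m, c q.1 q.2 := by
      refine Finset.sum_subset (Finset.subset_univ T) fun q _ hq' => ?_
      have : A q.1 q.2 = 0 := by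
        by_contra h
        exact hq' (Finset.mem_filter.mpr ⟨Finset.mem_univ q, h⟩)
      simp [hcdef, this]
    rw [h1, Fintype.sum_prod_type]
    have : ∀ i, ∑ j, c i j = 1 / (1 - p) := by
      intro i
      have := hrow i
      field_simp at this ⊢
      linarith
    simp_rw [this]
    simp
    ring
  have hCS : ((n : ℝ) / (1 - p)) ^ 2 ≤ (d * n : ℝ) * ∑ i, ∑ j, (c i j) ^ 2 := by
    have h0 := Finset.sum_mul_sq_le_sq_mul_sq T (fun _ => (1:ℝ)) (fun q => c q.1 q.2)
    simp only [one_mul, one_pow] at h0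
    rw [hsumc] at h0
    have hcard : (∑ _q ∈ T, (1:ℝ)) = (T.card : ℝ) := by simp
    rw [hcard] at h0
    have hc1 : ((T.card : ℝ)) ≤ (d : ℝ) * n := by exact_mod_cast hnnz
    have hc2 : ∑ q ∈ T, c q.1 q.2 ^ 2 ≤ ∑ i, ∑ j, (c i j) ^ 2 := by
      refine le_trans (Finset.sum_le_sum_of_subset_of_nonneg (Finset.subset_univ T)
        (fun q _ _ => sq_nonneg _)) ?_
      rw [Fintype.sum_prod_type]
    exact h0.trans (mul_le_mul hc1 hc2 (Finset.sum_nonneg fun q _ => sq_nonneg _)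
      (by positivity))
  have hS : (n : ℝ) / (d * (1 - p) ^ 2) ≤ ∑ i, ∑ j, (c i j) ^ 2 := by
    have hdn : (0:ℝ) < (d:ℝ) * n := by positivity
    rw [div_le_iff₀ (by positivity)]
    have hn' : (0:ℝ) < (n:ℝ) := by exact_mod_cast hn
    have h1 : (n:ℝ)^2 ≤ ((d:ℝ) * n * ∑ i, ∑ j, (c i j) ^ 2) * (1-p)^2 := by
      have h2 := mul_le_mul_of_nonneg_right hCS (le_of_lt (by positivity : (0:ℝ) < (1-p)^2))
      calc (n:ℝ)^2 = ((n:ℝ)/(1-p))^2 * (1-p)^2 := by field_simp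
        _ ≤ _ := h2
    nlinarith [h1, hn']
  rw [hTot]
  have hn' : (0:ℝ) < (n:ℝ) := by exact_mod_cast hn
  have hd' : (0:ℝ) < (d:ℝ) := by exact_mod_cast hd
  have hkey : p / (d * (1 - p)) = (1 / (n:ℝ)) * (p * (1 - p) * ((n:ℝ) / (d * (1 - p) ^ 2))) := by
    field_simp
  rw [hkey]
  exact mul_le_mul_of_nonneg_left (mul_le_mul_of_nonneg_left hS (by positivity))
    (by positivity)
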